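/- Typability captures clash-freeness of normal forms: a term t of the λ!-calculus belongs to no_wcf (weak clash free normal forms) if and only if t belongs to no_w (w-normal forms) and t is typable in system U, i.e. there exist Γ and σ with Γ ⊢ t : σ derivable in U. -/

import Mathlib

/-! # The Bang Calculus Revisited: common definitions.

Terms are represented with de Bruijn indices, so that all the meta-level
substitutions are capture-avoiding by construction. -/

/-- Terms of the λ!-calculus.  `esub t u` is the explicit substitution
`t[0\u]`: the (anonymous) binder scopes over `t`, not over `u`. -/
inductive Tm : Type
  | var : ℕ → Tm
  | app : Tm → Tm → Tm
  | lam : Tm → Tm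
  | bang : Tm → Tm
  | der : Tm → Tm
  | esub : Tm → Tm → Tm
  deriving DecidableEq

namespace Tm

/-- lifting a renaming under a binder -/
def liftR (f : ℕ → ℕ) : ℕ → ℕ
  | 0 => 0
  | k + 1 => f k + 1

/-- renaming of free variables -/
def rename (f : ℕ → ℕ) : Tm → Tm
  | var k => var (f k)
  | app t u => app (rename f t) (rename f u)
  | lam t => lam (rename (liftR f) t)
  | bang t => bang (rename f t)
  | der t => der (rename f t)
  | esub t u => esub (rename (liftR f) t) (rename f u)

/-- lifting a simultaneous substitution under a binder -/
def liftS (σ : ℕ → Tm) : ℕ → Tm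
  | 0 => var 0
  | k + 1 => rename (· + 1) (σ k)

/-- simultaneous (capture-avoiding) substitution -/
def subst (σ : ℕ → Tm) : Tm → Tm
  | var k => σ k
  | app t u => app (subst σ t) (subst σ u)
  | lam t => lam (subst (liftS σ) t)
  | bang t => bang (subst σ t)
  | der t => der (subst σ t)
  | esub t u => esub (subst (liftS σ) t) (subst σ u)

/-- capture-avoiding substitution of `u` for the variable `0` of `t`,
where the result is placed under `n` extra binders (and `u` already lives
at that depth). -/
def substIn (n : ℕ) (u : Tm) (t : Tm) : Tm :=
  subst (fun k => match k with
    | 0 => u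
    | k + 1 => var (k + n)) t

/-- capture-avoiding meta-level substitution `t{0 := u}` -/
def subst0 (u : Tm) (t : Tm) : Tm := substIn 0 u t

/-- plugging a term into a list context `L ::= ◻ | L[x\t]`; the head of the
list is the argument of the outermost explicit substitution. -/
def plug : List Tm → Tm → Tm
  | [], s => s
  | e :: L, s => esub (plug L s) e

/-- the w-size of a term -/
def wsize : Tm → ℕ
  | var _ => 0
  | app t u => 1 + wsize t + wsize u
  | lam t => 1 + wsize t
  | bang _ => 0
  | der t => 1 + wsize t
  | esub t u => 1 + wsize t + wsize u

end Tm

/-- the names of the three rewriting rules of the λ!-calculus -/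
inductive Rule : Type
  | dB | sb | db
  deriving DecidableEq

open Tm in
/-- the three rewriting rules, applied at the root (at a distance) -/
inductive Root : Rule → Tm → Tm → Prop
  | dB (L : List Tm) (t u : Tm) :
      Root .dB (app (plug L (lam t)) u)
               (plug L (esub t (rename (· + L.length) u)))
  | sb (L : List Tm) (t u : Tm) :
      Root .sb (esub t (plug L (bang u))) (plug L (substIn L.length u t))
  | db (L : List Tm) (t : Tm) :
      Root .db (der (plug L (bang t))) (plug L t)

/-- closure of each rule under weak contexts (no reduction under `bang`) -/
inductive Step : Rule → Tm → Tm → Prop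
  | root {r : Rule} {t t' : Tm} : Root r t t' → Step r t t'
  | appL {r t t'} (u : Tm) : Step r t t' → Step r (Tm.app t u) (Tm.app t' u)
  | appR {r u u'} (t : Tm) : Step r u u' → Step r (Tm.app t u) (Tm.app t u')
  | lam {r t t'} : Step r t t' → Step r (Tm.lam t) (Tm.lam t')
  | der {r t t'} : Step r t t' → Step r (Tm.der t) (Tm.der t')
  | esubL {r t t'} (u : Tm) : Step r t t' → Step r (Tm.esub t u) (Tm.esub t' u)
  | esubR {r u u'} (t : Tm) : Step r u u' → Step r (Tm.esub t u) (Tm.esub t u')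

/-- the weak reduction `→w` of the λ!-calculus -/
def StepW (t t' : Tm) : Prop := ∃ r, Step r t t'

/-- counted weak reduction: `RedCnt t (b, e) u` holds iff `t →w* u` using `b`
dB-steps and `e` steps of kind s!/d!. -/
inductive RedCnt : Tm → ℕ × ℕ → Tm → Prop
  | refl (t : Tm) : RedCnt t (0, 0) t
  | db {t t₁ u : Tm} {b e : ℕ} :
      Step .dB t t₁ → RedCnt t₁ (b, e) u → RedCnt t (b + 1, e) u
  | ex {t t₁ u : Tm} {b e : ℕ} :
      (Step .sb t t₁ ∨ Step .db t t₁) → RedCnt t₁ (b, e) u →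
      RedCnt t (b, e + 1) u

mutual
  /-- neutral w-normal terms -/
  inductive NeW : Tm → Prop
    | var (k : ℕ) : NeW (Tm.var k)
    | app {t u : Tm} : NaW t → NoW u → NeW (Tm.app t u)
    | der {t : Tm} : NbW t → NeW (Tm.der t)
    | esub {t u : Tm} : NeW t → NbW u → NeW (Tm.esub t u)
  /-- neutral-abs w-normal terms -/
  inductive NaW : Tm → Prop
    | bang (t : Tm) : NaW (Tm.bang t)
    | ne {t : Tm} : NeW t → NaW t
    | esub {t u : Tm} : NaW t → NbW u → NaW (Tm.esub t u)
  /-- neutral-bang w-normal terms -/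
  inductive NbW : Tm → Prop
    | ne {t : Tm} : NeW t → NbW t
    | lam {t : Tm} : NoW t → NbW (Tm.lam t)
    | esub {t u : Tm} : NbW t → NbW u → NbW (Tm.esub t u)
  /-- w-normal terms -/
  inductive NoW : Tm → Prop
    | na {t : Tm} : NaW t → NoW t
    | nb {t : Tm} : NbW t → NoW t
end

/-- clashes -/
inductive Clash : Tm → Prop
  | appBang (L : List Tm) (t u : Tm) : Clash (Tm.app (Tm.plug L (Tm.bang t)) u)
  | esubLam (L : List Tm) (t u : Tm) : Clash (Tm.esub t (Tm.plug L (Tm.lam u)))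
  | derLam (L : List Tm) (u : Tm) : Clash (Tm.der (Tm.plug L (Tm.lam u)))
  | appLam (L : List Tm) (t u : Tm) : Clash (Tm.app t (Tm.plug L (Tm.lam u)))

/-- `WSub t s` holds iff `t = W⟨s⟩` for some weak context `W` -/
inductive WSub : Tm → Tm → Prop
  | refl (t : Tm) : WSub t t
  | appL {t s : Tm} (u : Tm) : WSub t s → WSub (Tm.app t u) s
  | appR {u s : Tm} (t : Tm) : WSub u s → WSub (Tm.app t u) s
  | lam {t s : Tm} : WSub t s → WSub (Tm.lam t) s
  | der {t s : Tm} : WSub t s → WSub (Tm.der t) s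
  | esubL {t s : Tm} (u : Tm) : WSub t s → WSub (Tm.esub t u) s
  | esubR {u s : Tm} (t : Tm) : WSub u s → WSub (Tm.esub t u) s

/-- weak clash freeness -/
def Wcf (t : Tm) : Prop := ¬ ∃ s, WSub t s ∧ Clash s

mutual
  /-- neutral weak clash free normal terms -/
  inductive NeCF : Tm → Prop
    | var (k : ℕ) : NeCF (Tm.var k)
    | app {t u : Tm} : NeCF t → NaCF u → NeCF (Tm.app t u)
    | der {t : Tm} : NeCF t → NeCF (Tm.der t)
    | esub {t u : Tm} : NeCF t → NeCF u → NeCF (Tm.esub t u)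
  /-- neutral-abs weak clash free normal terms -/
  inductive NaCF : Tm → Prop
    | bang (t : Tm) : NaCF (Tm.bang t)
    | ne {t : Tm} : NeCF t → NaCF t
    | esub {t u : Tm} : NaCF t → NeCF u → NaCF (Tm.esub t u)
  /-- neutral-bang weak clash free normal terms -/
  inductive NbCF : Tm → Prop
    | ne {t : Tm} : NeCF t → NbCF t
    | lam {t : Tm} : NoCF t → NbCF (Tm.lam t)
    | esub {t u : Tm} : NbCF t → NeCF u → NbCF (Tm.esub t u)
  /-- weak clash free normal terms -/
  inductive NoCF : Tm → Prop
    | na {t : Tm} : NaCF t → NoCF t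
    | nb {t : Tm} : NbCF t → NoCF t
end

/-- Types of system 𝒰: base types, multiset types and arrow types.  A
multiset type is given by a list of types (a representative of the multiset
it determines). -/
inductive Ty : Type
  | base : ℕ → Ty
  | mult : List Ty → Ty
  | arr : List Ty → Ty → Ty

/-- typing contexts: functions from (de Bruijn) variables to multiset types -/
abbrev Ctx := ℕ → Multiset Ty

/-- the context mapping `k` to `M` and anything else to the empty multiset -/
def Ctx.single (k : ℕ) (M : Multiset Ty) : Ctx := fun j => if j = k then M else 0

/-- removing the (type of the) bound variable `0` from a context -/
def Ctx.tail (Γ : Ctx) : Ctx := fun k => Γ (k + 1)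

/-- extending a context with a multiset type for a fresh variable `0` -/
def Ctx.cons (M : Multiset Ty) (Γ : Ctx) : Ctx := fun k =>
  match k with
  | 0 => M
  | k + 1 => Γ k

/-- Sized typing of system 𝒰: `DerU Γ t τ n` means that there is a derivation
of `Γ ⊢ t : τ` whose size (number of rules, not counting `bg`) is `n`. -/
inductive DerU : Ctx → Tm → Ty → ℕ → Prop
  | ax (k : ℕ) (σ : Ty) : DerU (Ctx.single k {σ}) (Tm.var k) σ 1
  | app {Γ Δ : Ctx} {t u : Tm} {M : List Ty} {τ : Ty} {n m : ℕ} :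
      DerU Γ t (Ty.arr M τ) n → DerU Δ u (Ty.mult M) m →
      DerU (Γ + Δ) (Tm.app t u) τ (n + m + 1)
  | abs {Γ : Ctx} {t : Tm} {τ : Ty} {n : ℕ} (M : List Ty) :
      DerU Γ t τ n → Multiset.ofList M = Γ 0 →
      DerU (Ctx.tail Γ) (Tm.lam t) (Ty.arr M τ) (n + 1)
  | es {Γ Δ : Ctx} {t u : Tm} {σ : Ty} {M : List Ty} {n m : ℕ} :
      DerU Γ t σ n → DerU Δ u (Ty.mult M) m → Multiset.ofList M = Γ 0 →
      DerU (Ctx.tail Γ + Δ) (Tm.esub t u) σ (n + m + 1)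
  | bg {t : Tm} (prs : List (Ctx × Ty × ℕ)) :
      (∀ p ∈ prs, DerU p.1 t p.2.1 p.2.2) →
      DerU ((prs.map (·.1)).sum) (Tm.bang t)
           (Ty.mult (prs.map (·.2.1))) ((prs.map (·.2.2)).sum)
  | dr {Γ : Ctx} {t : Tm} {σ : Ty} {n : ℕ} :
      DerU Γ t (Ty.mult [σ]) n → DerU Γ (Tm.der t) σ (n + 1)

/-! ## The source λ-calculus with explicit substitutions (CBN / CBV) -/

/-- terms of the λ-calculus with explicit substitutions (de Bruijn) -/
inductive Lm : Type
  | var : ℕ → Lm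
  | app : Lm → Lm → Lm
  | lam : Lm → Lm
  | esub : Lm → Lm → Lm
  deriving DecidableEq

namespace Lm

def liftR (f : ℕ → ℕ) : ℕ → ℕ
  | 0 => 0
  | k + 1 => f k + 1

def rename (f : ℕ → ℕ) : Lm → Lm
  | var k => var (f k)
  | app t u => app (rename f t) (rename f u)
  | lam t => lam (rename (liftR f) t)
  | esub t u => esub (rename (liftR f) t) (rename f u)

def liftS (σ : ℕ → Lm) : ℕ → Lm
  | 0 => var 0
  | k + 1 => rename (· + 1) (σ k)

def subst (σ : ℕ → Lm) : Lm → Lm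
  | var k => σ k
  | app t u => app (subst σ t) (subst σ u)
  | lam t => lam (subst (liftS σ) t)
  | esub t u => esub (subst (liftS σ) t) (subst σ u)

def substIn (n : ℕ) (u : Lm) (t : Lm) : Lm :=
  subst (fun k => match k with
    | 0 => u
    | k + 1 => var (k + n)) t

/-- capture-avoiding meta-level substitution `t{0 := u}` -/
def subst0 (u : Lm) (t : Lm) : Lm := substIn 0 u t

def plug : List Lm → Lm → Lm
  | [], s => s
  | e :: L, s => esub (plug L s) e

/-- values -/
def IsVal : Lm → Prop
  | var _ => True
  | lam _ => True
  | _ => False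

/-- the n-size of a term -/
def nsize : Lm → ℕ
  | var _ => 0
  | lam t => 1 + nsize t
  | app t _ => 1 + nsize t
  | esub t _ => 1 + nsize t

/-- the v-size of a term -/
def vsize : Lm → ℕ
  | var _ => 0
  | lam _ => 0
  | app t u => 1 + vsize t + vsize u
  | esub t u => 1 + vsize t + vsize u

end Lm

/-- names of the CBN rules -/
inductive NRule : Type
  | dB | s
  deriving DecidableEq

/-- call-by-name reduction (closure of dB and s under CBN contexts) -/
inductive StepN : NRule → Lm → Lm → Prop
  | dB (L : List Lm) (t u : Lm) :
      StepN .dB (Lm.app (Lm.plug L (Lm.lam t)) u)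
                (Lm.plug L (Lm.esub t (Lm.rename (· + L.length) u)))
  | s (t u : Lm) : StepN .s (Lm.esub t u) (Lm.subst0 u t)
  | appL {r t t'} (u : Lm) : StepN r t t' → StepN r (Lm.app t u) (Lm.app t' u)
  | lam {r t t'} : StepN r t t' → StepN r (Lm.lam t) (Lm.lam t')
  | esubL {r t t'} (u : Lm) : StepN r t t' → StepN r (Lm.esub t u) (Lm.esub t' u)

/-- names of the CBV rules -/
inductive VRule : Type
  | dB | sv
  deriving DecidableEq

/-- call-by-value reduction (closure of dB and sv under CBV contexts) -/
inductive StepV : VRule → Lm → Lm → Prop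
  | dB (L : List Lm) (t u : Lm) :
      StepV .dB (Lm.app (Lm.plug L (Lm.lam t)) u)
                (Lm.plug L (Lm.esub t (Lm.rename (· + L.length) u)))
  | sv (L : List Lm) (t v : Lm) (hv : Lm.IsVal v) :
      StepV .sv (Lm.esub t (Lm.plug L v)) (Lm.plug L (Lm.substIn L.length v t))
  | appL {r t t'} (u : Lm) : StepV r t t' → StepV r (Lm.app t u) (Lm.app t' u)
  | appR {r u u'} (t : Lm) : StepV r u u' → StepV r (Lm.app t u) (Lm.app t u')
  | esubL {r t t'} (u : Lm) : StepV r t t' → StepV r (Lm.esub t u) (Lm.esub t' u)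
  | esubR {r u u'} (t : Lm) : StepV r u u' → StepV r (Lm.esub t u) (Lm.esub t u')

mutual
  /-- CBN neutral terms -/
  inductive NeN : Lm → Prop
    | var (k : ℕ) : NeN (Lm.var k)
    | app {t : Lm} (u : Lm) : NeN t → NeN (Lm.app t u)
  /-- CBN normal terms -/
  inductive NoN : Lm → Prop
    | lam {t : Lm} : NoN t → NoN (Lm.lam t)
    | ne {t : Lm} : NeN t → NoN t
end

mutual
  /-- CBV (substituted) variables -/
  inductive VrV : Lm → Prop
    | var (k : ℕ) : VrV (Lm.var k)
    | esub {t u : Lm} : VrV t → NeV u → VrV (Lm.esub t u)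
  /-- CBV neutral terms -/
  inductive NeV : Lm → Prop
    | app₁ {t u : Lm} : VrV t → NoV u → NeV (Lm.app t u)
    | app₂ {t u : Lm} : NeV t → NoV u → NeV (Lm.app t u)
    | esub {t u : Lm} : NeV t → NeV u → NeV (Lm.esub t u)
  /-- CBV normal terms -/
  inductive NoV : Lm → Prop
    | lam (t : Lm) : NoV (Lm.lam t)
    | vr {t : Lm} : VrV t → NoV t
    | ne {t : Lm} : NeV t → NoV t
    | esub {t u : Lm} : NoV t → NeV u → NoV (Lm.esub t u)
end

/-- counted CBN reduction, recording the number of dB- and s-steps -/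
inductive RedCntN : Lm → ℕ × ℕ → Lm → Prop
  | refl (t : Lm) : RedCntN t (0, 0) t
  | db {t t₁ u : Lm} {b e : ℕ} :
      StepN .dB t t₁ → RedCntN t₁ (b, e) u → RedCntN t (b + 1, e) u
  | s {t t₁ u : Lm} {b e : ℕ} :
      StepN .s t t₁ → RedCntN t₁ (b, e) u → RedCntN t (b, e + 1) u

/-- counted CBV reduction, recording the number of dB- and sv-steps -/
inductive RedCntV : Lm → ℕ × ℕ → Lm → Prop
  | refl (t : Lm) : RedCntV t (0, 0) t
  | db {t t₁ u : Lm} {b e : ℕ} :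
      StepV .dB t t₁ → RedCntV t₁ (b, e) u → RedCntV t (b + 1, e) u
  | sv {t t₁ u : Lm} {b e : ℕ} :
      StepV .sv t t₁ → RedCntV t₁ (b, e) u → RedCntV t (b, e + 1) u

/-- the CBN embedding into the λ!-calculus -/
def cbn : Lm → Tm
  | .var k => .var k
  | .lam t => .lam (cbn t)
  | .app t u => .app (cbn t) (.bang (cbn u))
  | .esub t u => .esub (cbn t) (.bang (cbn u))

/-- `deBang t = some s'` iff `t = L⟨!s⟩` and `s' = L⟨s⟩` -/
def deBang : Tm → Option Tm
  | .bang s => some s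
  | .esub t e => (deBang t).map (fun s => Tm.esub s e)
  | _ => none

/-- the CBV embedding into the λ!-calculus -/
def cbv : Lm → Tm
  | .var k => .bang (.var k)
  | .lam t => .bang (.lam (cbv t))
  | .app t u =>
      match deBang (cbv t) with
      | some r => Tm.app r (cbv u)
      | none => Tm.app (.der (cbv t)) (cbv u)
  | .esub t u => .esub (cbv t) (cbv u)

/-- Sized typing of system 𝒩 (call-by-name): `DerN Γ t τ n` means that there
is a derivation of `Γ ⊢ t : τ` of size `n` (counting all rules). -/
inductive DerN : Ctx → Lm → Ty → ℕ → Prop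
  | ax (k : ℕ) (σ : Ty) : DerN (Ctx.single k {σ}) (Lm.var k) σ 1
  | app {Γ : Ctx} {t u : Lm} {τ : Ty} {n : ℕ} (prs : List (Ctx × Ty × ℕ)) :
      DerN Γ t (Ty.arr (prs.map (·.2.1)) τ) n →
      (∀ p ∈ prs, DerN p.1 u p.2.1 p.2.2) →
      DerN (Γ + (prs.map (·.1)).sum) (Lm.app t u) τ
           (n + (prs.map (·.2.2)).sum + 1)
  | abs {Γ : Ctx} {t : Lm} {τ : Ty} {n : ℕ} (M : List Ty) :
      DerN Γ t τ n → Multiset.ofList M = Γ 0 →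
      DerN (Ctx.tail Γ) (Lm.lam t) (Ty.arr M τ) (n + 1)
  | es {Γ : Ctx} {t u : Lm} {τ : Ty} {n : ℕ} (prs : List (Ctx × Ty × ℕ)) :
      DerN Γ t τ n →
      Multiset.ofList (prs.map (·.2.1)) = Γ 0 →
      (∀ p ∈ prs, DerN p.1 u p.2.1 p.2.2) →
      DerN (Ctx.tail Γ + (prs.map (·.1)).sum) (Lm.esub t u) τ
           (n + (prs.map (·.2.2)).sum + 1)

/-- Sized typing of system 𝒱 (call-by-value): `DerV Γ t τ n` means that there
is a derivation of `Γ ⊢ t : τ` of size `n` (each rule counts 1, except that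
`ax` counts the cardinal of its multiset and `abs` contributes the sizes of
its premises plus the number of premises). -/
inductive DerV : Ctx → Lm → Ty → ℕ → Prop
  | ax (k : ℕ) (M : List Ty) :
      DerV (Ctx.single k (Multiset.ofList M)) (Lm.var k) (Ty.mult M) M.length
  | es {Γ Δ : Ctx} {t u : Lm} {σ : Ty} {M : List Ty} {n m : ℕ} :
      DerV Γ t σ n → DerV Δ u (Ty.mult M) m → Multiset.ofList M = Γ 0 →
      DerV (Ctx.tail Γ + Δ) (Lm.esub t u) σ (n + m + 1)
  | abs {t : Lm} (prs : List (Ctx × List Ty × Ty × ℕ)) :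
      (∀ p ∈ prs, DerV p.1 t p.2.2.1 p.2.2.2) →
      (∀ p ∈ prs, Multiset.ofList p.2.1 = p.1 0) →
      DerV ((prs.map (fun p => Ctx.tail p.1)).sum) (Lm.lam t)
           (Ty.mult (prs.map (fun p => Ty.arr p.2.1 p.2.2.1)))
           ((prs.map (·.2.2.2)).sum + prs.length)
  | app {Γ Δ : Ctx} {t u : Lm} {M : List Ty} {τ : Ty} {n m : ℕ} :
      DerV Γ t (Ty.mult [Ty.arr M τ]) n → DerV Δ u (Ty.mult M) m →
      DerV (Γ + Δ) (Lm.app t u) τ (n + m + 1)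
private lemma ofList_toList (s : Multiset Ty) : Multiset.ofList s.toList = s :=
  s.coe_toList

private lemma bangTy : ∀ t : Tm, ∃ Γ n, DerU Γ (Tm.bang t) (Ty.mult []) n := by
  intro t
  refine ⟨_, _, DerU.bg (t := t) [] (fun p hp => absurd hp List.not_mem_nil)⟩

/-- Forward direction: clash-free normal forms are normal and typable. -/
private lemma fwd : ∀ t : Tm,
    (NeCF t → NeW t ∧ ∀ σ, ∃ Γ n, DerU Γ t σ n) ∧
    (NaCF t → NaW t ∧ ∃ Γ M n, DerU Γ t (Ty.mult M) n) ∧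
    (NbCF t → NbW t ∧ ∃ Γ σ n, DerU Γ t σ n) ∧
    (NoCF t → NoW t ∧ ∃ Γ σ n, DerU Γ t σ n) := by
  intro t
  induction t with
  | var k =>
    have hE : NeCF (Tm.var k) → NeW (Tm.var k) ∧ ∀ σ, ∃ Γ n, DerU Γ (Tm.var k) σ n := by
      intro _
      exact ⟨NeW.var k, fun σ => ⟨_, _, DerU.ax k σ⟩⟩
    refine ⟨hE, ?_, ?_, ?_⟩
    · rintro (_ | h | _)
      obtain ⟨hw, hty⟩ := hE h
      exact ⟨NaW.ne hw, _, [], (hty (Ty.mult [])).choose_spec.choose,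
        (hty (Ty.mult [])).choose_spec.choose_spec⟩
    · rintro (h | _ | _)
      obtain ⟨hw, hty⟩ := hE h
      obtain ⟨Γ, n, d⟩ := hty (Ty.mult [])
      exact ⟨NbW.ne hw, Γ, _, n, d⟩
    · rintro (h | h)
      · rcases h with _ | h | _
        obtain ⟨hw, hty⟩ := hE h
        obtain ⟨Γ, n, d⟩ := hty (Ty.mult [])
        exact ⟨NoW.na (NaW.ne hw), Γ, _, n, d⟩
      · rcases h with h | _ | _
        obtain ⟨hw, hty⟩ := hE h
        obtain ⟨Γ, n, d⟩ := hty (Ty.mult [])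
        exact ⟨NoW.nb (NbW.ne hw), Γ, _, n, d⟩
  | app a b iha ihb =>
    have hE : NeCF (Tm.app a b) → NeW (Tm.app a b) ∧
        ∀ σ, ∃ Γ n, DerU Γ (Tm.app a b) σ n := by
      rintro (_ | ⟨ha, hb⟩)
      obtain ⟨haw, haty⟩ := iha.1 ha
      obtain ⟨hbw, Δ, M, m, db⟩ := (ihb.2.1) hb
      refine ⟨NeW.app (NaW.ne haw) (NoW.na hbw), fun σ => ?_⟩
      obtain ⟨Γ, n, da⟩ := haty (Ty.arr M σ)
      exact ⟨_, _, DerU.app da db⟩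
    refine ⟨hE, ?_, ?_, ?_⟩
    · rintro (_ | h | _)
      obtain ⟨hw, hty⟩ := hE h
      obtain ⟨Γ, n, d⟩ := hty (Ty.mult [])
      exact ⟨NaW.ne hw, Γ, _, n, d⟩
    · rintro (h | _ | _)
      obtain ⟨hw, hty⟩ := hE h
      obtain ⟨Γ, n, d⟩ := hty (Ty.mult [])
      exact ⟨NbW.ne hw, Γ, _, n, d⟩
    · rintro (h | h)
      · rcases h with _ | h | _
        obtain ⟨hw, hty⟩ := hE h
        obtain ⟨Γ, n, d⟩ := hty (Ty.mult [])
        exact ⟨NoW.na (NaW.ne hw), Γ, _, n, d⟩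
      · rcases h with h | _ | _
        obtain ⟨hw, hty⟩ := hE h
        obtain ⟨Γ, n, d⟩ := hty (Ty.mult [])
        exact ⟨NoW.nb (NbW.ne hw), Γ, _, n, d⟩
  | lam a iha =>
    have hE : NeCF (Tm.lam a) → NeW (Tm.lam a) ∧ ∀ σ, ∃ Γ n, DerU Γ (Tm.lam a) σ n := by
      rintro ⟨⟩
    refine ⟨hE, ?_, ?_, ?_⟩
    · rintro (_ | h | _); exact absurd h (by rintro ⟨⟩)
    · rintro (h | ⟨h⟩ | _)
      · exact absurd h (by rintro ⟨⟩)
      · obtain ⟨hw, Γ, σ, n, d⟩ := iha.2.2.2 h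
        exact ⟨NbW.lam hw, _, _, _, DerU.abs (Γ 0).toList d (ofList_toList _)⟩
    · rintro (h | h)
      · rcases h with _ | h | _
        exact absurd h (by rintro ⟨⟩)
      · rcases h with h | ⟨h⟩ | _
        · exact absurd h (by rintro ⟨⟩)
        · obtain ⟨hw, Γ, σ, n, d⟩ := iha.2.2.2 h
          exact ⟨NoW.nb (NbW.lam hw), _, _, _,
            DerU.abs (Γ 0).toList d (ofList_toList _)⟩
  | bang a iha =>
    have hE : NeCF (Tm.bang a) → NeW (Tm.bang a) ∧ ∀ σ, ∃ Γ n, DerU Γ (Tm.bang a) σ n := by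
      rintro ⟨⟩
    have hA : NaCF (Tm.bang a) → NaW (Tm.bang a) ∧
        ∃ Γ M n, DerU Γ (Tm.bang a) (Ty.mult M) n := by
      intro _
      obtain ⟨Γ, n, d⟩ := bangTy a
      exact ⟨NaW.bang a, Γ, [], n, d⟩
    refine ⟨hE, hA, ?_, ?_⟩
    · rintro (h | _ | _); exact absurd h (by rintro ⟨⟩)
    · rintro (h | h)
      · obtain ⟨hw, Γ, M, n, d⟩ := hA h
        exact ⟨NoW.na hw, Γ, _, n, d⟩
      · rcases h with h | _ | _
        exact absurd h (by rintro ⟨⟩)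
  | der a iha =>
    have hE : NeCF (Tm.der a) → NeW (Tm.der a) ∧ ∀ σ, ∃ Γ n, DerU Γ (Tm.der a) σ n := by
      rintro (_ | _ | ⟨h⟩)
      obtain ⟨hw, hty⟩ := iha.1 h
      refine ⟨NeW.der (NbW.ne hw), fun σ => ?_⟩
      obtain ⟨Γ, n, d⟩ := hty (Ty.mult [σ])
      exact ⟨Γ, _, DerU.dr d⟩
    refine ⟨hE, ?_, ?_, ?_⟩
    · rintro (_ | h | _)
      obtain ⟨hw, hty⟩ := hE h
      obtain ⟨Γ, n, d⟩ := hty (Ty.mult [])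
      exact ⟨NaW.ne hw, Γ, _, n, d⟩
    · rintro (h | _ | _)
      obtain ⟨hw, hty⟩ := hE h
      obtain ⟨Γ, n, d⟩ := hty (Ty.mult [])
      exact ⟨NbW.ne hw, Γ, _, n, d⟩
    · rintro (h | h)
      · rcases h with _ | h | _
        obtain ⟨hw, hty⟩ := hE h
        obtain ⟨Γ, n, d⟩ := hty (Ty.mult [])
        exact ⟨NoW.na (NaW.ne hw), Γ, _, n, d⟩
      · rcases h with h | _ | _
        obtain ⟨hw, hty⟩ := hE h
        obtain ⟨Γ, n, d⟩ := hty (Ty.mult [])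
        exact ⟨NoW.nb (NbW.ne hw), Γ, _, n, d⟩
  | esub a b iha ihb =>
    have hE : NeCF (Tm.esub a b) → NeW (Tm.esub a b) ∧
        ∀ σ, ∃ Γ n, DerU Γ (Tm.esub a b) σ n := by
      rintro (_ | _ | _ | ⟨ha, hb⟩)
      obtain ⟨haw, haty⟩ := iha.1 ha
      obtain ⟨hbw, hbty⟩ := ihb.1 hb
      refine ⟨NeW.esub haw (NbW.ne hbw), fun σ => ?_⟩
      obtain ⟨Γ, n, d⟩ := haty σ
      obtain ⟨Δ, m, du⟩ := hbty (Ty.mult (Γ 0).toList)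
      exact ⟨_, _, DerU.es d du (ofList_toList _)⟩
    have hA : NaCF (Tm.esub a b) → NaW (Tm.esub a b) ∧
        ∃ Γ M n, DerU Γ (Tm.esub a b) (Ty.mult M) n := by
      rintro (_ | h | ⟨ha, hb⟩)
      · obtain ⟨hw, hty⟩ := hE h
        obtain ⟨Γ, n, d⟩ := hty (Ty.mult [])
        exact ⟨NaW.ne hw, Γ, _, n, d⟩
      · obtain ⟨haw, Γ, M, n, d⟩ := iha.2.1 ha
        obtain ⟨hbw, hbty⟩ := ihb.1 hb
        obtain ⟨Δ, m, du⟩ := hbty (Ty.mult (Γ 0).toList)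
        exact ⟨NaW.esub haw (NbW.ne hbw), _, M, _,
          DerU.es d du (ofList_toList _)⟩
    have hB : NbCF (Tm.esub a b) → NbW (Tm.esub a b) ∧
        ∃ Γ σ n, DerU Γ (Tm.esub a b) σ n := by
      rintro (h | _ | ⟨ha, hb⟩)
      · obtain ⟨hw, hty⟩ := hE h
        obtain ⟨Γ, n, d⟩ := hty (Ty.mult [])
        exact ⟨NbW.ne hw, Γ, _, n, d⟩
      · obtain ⟨haw, Γ, σ, n, d⟩ := iha.2.2.1 ha
        obtain ⟨hbw, hbty⟩ := ihb.1 hb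
        obtain ⟨Δ, m, du⟩ := hbty (Ty.mult (Γ 0).toList)
        exact ⟨NbW.esub haw (NbW.ne hbw), _, σ, _,
          DerU.es d du (ofList_toList _)⟩
    refine ⟨hE, hA, hB, ?_⟩
    rintro (h | h)
    · obtain ⟨hw, Γ, M, n, d⟩ := hA h
      exact ⟨NoW.na hw, Γ, _, n, d⟩
    · obtain ⟨hw, Γ, σ, n, d⟩ := hB h
      exact ⟨NoW.nb hw, Γ, σ, n, d⟩

/-- Backward direction: normal + typable implies clash-free. -/
private lemma bwd : ∀ t : Tm,
    (NeW t → ∀ Γ σ n, DerU Γ t σ n → NeCF t) ∧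
    (NaW t → (∀ Γ M τ n, DerU Γ t (Ty.arr M τ) n → NeCF t) ∧
             (∀ Γ σ n, DerU Γ t σ n → NaCF t)) ∧
    (NbW t → (∀ Γ M n, DerU Γ t (Ty.mult M) n → NeCF t) ∧
             (∀ Γ σ n, DerU Γ t σ n → NbCF t)) ∧
    (NoW t → (∀ Γ M n, DerU Γ t (Ty.mult M) n → NaCF t) ∧
             (∀ Γ σ n, DerU Γ t σ n → NoCF t)) := by
  intro t
  induction t with
  | var k =>
    have hE : NeW (Tm.var k) → ∀ Γ σ n, DerU Γ (Tm.var k) σ n → NeCF (Tm.var k) :=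
      fun _ _ _ _ _ => NeCF.var k
    refine ⟨hE, ?_, ?_, ?_⟩
    · rintro (_ | h | _)
      exact ⟨fun Γ M τ n d => hE h Γ _ n d, fun Γ σ n d => NaCF.ne (hE h Γ σ n d)⟩
    · rintro (h | _ | _)
      exact ⟨fun Γ M n d => hE h Γ _ n d, fun Γ σ n d => NbCF.ne (hE h Γ σ n d)⟩
    · rintro (h | h)
      · rcases h with _ | h | _
        exact ⟨fun Γ M n d => NaCF.ne (hE h Γ _ n d),
               fun Γ σ n d => NoCF.na (NaCF.ne (hE h Γ σ n d))⟩
      · rcases h with h | _ | _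
        exact ⟨fun Γ M n d => NaCF.ne (hE h Γ _ n d),
               fun Γ σ n d => NoCF.nb (NbCF.ne (hE h Γ σ n d))⟩
  | app a b iha ihb =>
    have hE : NeW (Tm.app a b) → ∀ Γ σ n, DerU Γ (Tm.app a b) σ n →
        NeCF (Tm.app a b) := by
      rintro (_ | ⟨ha, hb⟩) Γ σ n d
      cases d with
      | app d₁ d₂ =>
        exact NeCF.app ((iha.2.1 ha).1 _ _ _ _ d₁) ((ihb.2.2.2 hb).1 _ _ _ d₂)
    refine ⟨hE, ?_, ?_, ?_⟩
    · rintro (_ | h | _)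
      exact ⟨fun Γ M τ n d => hE h Γ _ n d, fun Γ σ n d => NaCF.ne (hE h Γ σ n d)⟩
    · rintro (h | _ | _)
      exact ⟨fun Γ M n d => hE h Γ _ n d, fun Γ σ n d => NbCF.ne (hE h Γ σ n d)⟩
    · rintro (h | h)
      · rcases h with _ | h | _
        exact ⟨fun Γ M n d => NaCF.ne (hE h Γ _ n d),
               fun Γ σ n d => NoCF.na (NaCF.ne (hE h Γ σ n d))⟩
      · rcases h with h | _ | _
        exact ⟨fun Γ M n d => NaCF.ne (hE h Γ _ n d),
               fun Γ σ n d => NoCF.nb (NbCF.ne (hE h Γ σ n d))⟩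
  | lam a iha =>
    have hE : NeW (Tm.lam a) → ∀ Γ σ n, DerU Γ (Tm.lam a) σ n →
        NeCF (Tm.lam a) := by rintro ⟨⟩
    have hB : NbW (Tm.lam a) → (∀ Γ M n, DerU Γ (Tm.lam a) (Ty.mult M) n →
          NeCF (Tm.lam a)) ∧
        (∀ Γ σ n, DerU Γ (Tm.lam a) σ n → NbCF (Tm.lam a)) := by
      rintro (h | ⟨h⟩ | _)
      · exact absurd h (by rintro ⟨⟩)
      · constructor
        · intro Γ M n d; cases d
        · intro Γ σ n d
          cases d with
          | abs M d₁ hM => exact NbCF.lam ((iha.2.2.2 h).2 _ _ _ d₁)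
    refine ⟨hE, ?_, hB, ?_⟩
    · rintro (_ | h | _)
      exact absurd h (by rintro ⟨⟩)
    · rintro (h | h)
      · rcases h with _ | h | _
        exact absurd h (by rintro ⟨⟩)
      · exact ⟨fun Γ M n d => NaCF.ne ((hB h).1 Γ M n d),
               fun Γ σ n d => NoCF.nb ((hB h).2 Γ σ n d)⟩
  | bang a iha =>
    have hE : NeW (Tm.bang a) → ∀ Γ σ n, DerU Γ (Tm.bang a) σ n →
        NeCF (Tm.bang a) := by rintro ⟨⟩
    have hA : NaW (Tm.bang a) → (∀ Γ M τ n, DerU Γ (Tm.bang a) (Ty.arr M τ) n →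
          NeCF (Tm.bang a)) ∧
        (∀ Γ σ n, DerU Γ (Tm.bang a) σ n → NaCF (Tm.bang a)) := by
      intro _
      constructor
      · intro Γ M τ n d; cases d
      · intro Γ σ n d; exact NaCF.bang a
    refine ⟨hE, hA, ?_, ?_⟩
    · rintro (h | _ | _)
      exact absurd h (by rintro ⟨⟩)
    · rintro (h | h)
      · exact ⟨fun Γ M n d => (hA h).2 Γ _ n d, fun Γ σ n d => NoCF.na ((hA h).2 Γ σ n d)⟩
      · rcases h with h | _ | _
        exact absurd h (by rintro ⟨⟩)
  | der a iha =>
    have hE : NeW (Tm.der a) → ∀ Γ σ n, DerU Γ (Tm.der a) σ n →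
        NeCF (Tm.der a) := by
      rintro (_ | _ | ⟨h⟩) Γ σ n d
      cases d with
      | dr d₁ => exact NeCF.der ((iha.2.2.1 h).1 _ _ _ d₁)
    refine ⟨hE, ?_, ?_, ?_⟩
    · rintro (_ | h | _)
      exact ⟨fun Γ M τ n d => hE h Γ _ n d, fun Γ σ n d => NaCF.ne (hE h Γ σ n d)⟩
    · rintro (h | _ | _)
      exact ⟨fun Γ M n d => hE h Γ _ n d, fun Γ σ n d => NbCF.ne (hE h Γ σ n d)⟩
    · rintro (h | h)
      · rcases h with _ | h | _
        exact ⟨fun Γ M n d => NaCF.ne (hE h Γ _ n d),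
               fun Γ σ n d => NoCF.na (NaCF.ne (hE h Γ σ n d))⟩
      · rcases h with h | _ | _
        exact ⟨fun Γ M n d => NaCF.ne (hE h Γ _ n d),
               fun Γ σ n d => NoCF.nb (NbCF.ne (hE h Γ σ n d))⟩
  | esub a b iha ihb =>
    have hE : NeW (Tm.esub a b) → ∀ Γ σ n, DerU Γ (Tm.esub a b) σ n →
        NeCF (Tm.esub a b) := by
      rintro (_ | _ | _ | ⟨ha, hb⟩) Γ σ n d
      cases d with
      | es d₁ d₂ hM =>
        exact NeCF.esub (iha.1 ha _ _ _ d₁) ((ihb.2.2.1 hb).1 _ _ _ d₂)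
    have hA : NaW (Tm.esub a b) → (∀ Γ M τ n, DerU Γ (Tm.esub a b) (Ty.arr M τ) n →
          NeCF (Tm.esub a b)) ∧
        (∀ Γ σ n, DerU Γ (Tm.esub a b) σ n → NaCF (Tm.esub a b)) := by
      rintro (_ | h | ⟨ha, hb⟩)
      · exact ⟨fun Γ M τ n d => hE h Γ _ n d, fun Γ σ n d => NaCF.ne (hE h Γ σ n d)⟩
      · constructor
        · intro Γ M τ n d
          cases d with
          | es d₁ d₂ hM =>
            exact NeCF.esub ((iha.2.1 ha).1 _ _ _ _ d₁) ((ihb.2.2.1 hb).1 _ _ _ d₂)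
        · intro Γ σ n d
          cases d with
          | es d₁ d₂ hM =>
            exact NaCF.esub ((iha.2.1 ha).2 _ _ _ d₁) ((ihb.2.2.1 hb).1 _ _ _ d₂)
    have hB : NbW (Tm.esub a b) → (∀ Γ M n, DerU Γ (Tm.esub a b) (Ty.mult M) n →
          NeCF (Tm.esub a b)) ∧
        (∀ Γ σ n, DerU Γ (Tm.esub a b) σ n → NbCF (Tm.esub a b)) := by
      rintro (h | _ | ⟨ha, hb⟩)
      · exact ⟨fun Γ M n d => hE h Γ _ n d, fun Γ σ n d => NbCF.ne (hE h Γ σ n d)⟩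
      · constructor
        · intro Γ M n d
          cases d with
          | es d₁ d₂ hM =>
            exact NeCF.esub ((iha.2.2.1 ha).1 _ _ _ d₁) ((ihb.2.2.1 hb).1 _ _ _ d₂)
        · intro Γ σ n d
          cases d with
          | es d₁ d₂ hM =>
            exact NbCF.esub ((iha.2.2.1 ha).2 _ _ _ d₁) ((ihb.2.2.1 hb).1 _ _ _ d₂)
    refine ⟨hE, hA, hB, ?_⟩
    rintro (h | h)
    · exact ⟨fun Γ M n d => (hA h).2 Γ _ n d, fun Γ σ n d => NoCF.na ((hA h).2 Γ σ n d)⟩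
    · exact ⟨fun Γ M n d => NaCF.ne ((hB h).1 Γ M n d),
             fun Γ σ n d => NoCF.nb ((hB h).2 Γ σ n d)⟩

/-- **Typability captures clash-freeness of normal forms** (Theorem 2):
`t ∈ no_wcf` iff `t ∈ no_w` and `t` is 𝒰-typable. -/
theorem nocf_iff_normal_typable (t : Tm) :
    NoCF t ↔ (NoW t ∧ ∃ (Γ : Ctx) (σ : Ty) (n : ℕ), DerU Γ t σ n) := by
  constructor
  · intro h
    exact (fwd t).2.2.2 h
  · rintro ⟨hw, Γ, σ, n, d⟩
    exact ((bwd t).2.2.2 hw).2 Γ σ n d
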